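/- If S < ∞, then the limit lim_{z→S⁻} h(z) exists and is finite; consequently h is bounded on (0,S) and extends to a continuous function on [0,S]. -/

import Mathlib

open MeasureTheory Set Filter Topology

/-- For `S < ∞` and `m` satisfying (M) on `(0,S)`, with
`h(z) := ∫_{s₀}^z (z−r)/m(r) dr`, the limit of `h` as `z → S⁻` exists and is finite;
consequently `h` is bounded on `(0,S)` and extends to a continuous function on `[0,S]`. -/
theorem limit_of_h_at_S_exists
    (S : ℝ) (hS : 0 < S) (m : ℝ → ℝ)
    (hm_c2 : ContDiffOn ℝ 2 m (Ioo 0 S))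
    (hm_pos : ∀ z ∈ Ioo (0 : ℝ) S, 0 < m z)
    (hm_conc : ∀ z ∈ Ioo (0 : ℝ) S, deriv (deriv m) z ≤ 0)
    (hm0 : Tendsto m (𝓝[>] (0 : ℝ)) (𝓝 0))
    (hmS : Tendsto m (𝓝[<] S) (𝓝 0))
    (s₀ : ℝ) (hs₀ : s₀ ∈ Ioo (0 : ℝ) S) :
    (∃ L : ℝ, Tendsto (fun z => ∫ r in s₀..z, (z - r) / m r) (𝓝[<] S) (𝓝 L)) ∧
    (∃ C : ℝ, ∀ z ∈ Ioo (0 : ℝ) S, |∫ r in s₀..z, (z - r) / m r| ≤ C) ∧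
    (∃ H : ℝ → ℝ, ContinuousOn H (Icc 0 S) ∧
      ∀ z ∈ Ioo (0 : ℝ) S, H z = ∫ r in s₀..z, (z - r) / m r) := by
  obtain ⟨hs0pos, hs0S⟩ := hs₀
  set c : ℝ := m s₀ with hc
  have hcpos : 0 < c := hm_pos s₀ ⟨hs0pos, hs0S⟩
  have hmc : ContinuousOn m (Ioo 0 S) := hm_c2.continuousOn
  -- concavity of m
  have hconc : ConcaveOn ℝ (Ioo 0 S) m := by
    apply concaveOn_of_deriv2_nonpos (convex_Ioo 0 S) hmc
    · rw [interior_Ioo]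
      exact hm_c2.differentiableOn (by norm_num)
    · rw [interior_Ioo]
      exact (hm_c2.deriv_of_isOpen (m := 1) isOpen_Ioo (by norm_num)).differentiableOn one_ne_zero
    · rw [interior_Ioo]
      intro x hx
      simpa [Function.iterate_succ, Function.iterate_zero] using hm_conc x hx
  -- lower bound near S
  have lemS : ∀ r, s₀ ≤ r → r < S → c * (S - r) / (2 * (S - s₀)) ≤ m r := by
    intro r hr1 hr2
    set t : ℝ := (r + S) / 2 with ht
    have htr : r < t := by simp only [ht]; linarith
    have htS : t < S := by simp only [ht]; linarith
    have ht0 : 0 < t := by simp only [ht]; linarith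
    have hts : s₀ < t := lt_of_le_of_lt hr1 htr
    have htd : (0:ℝ) < t - s₀ := by linarith
    have hmt : 0 < m t := hm_pos t ⟨ht0, htS⟩
    set a : ℝ := (t - r) / (t - s₀) with ha
    set b : ℝ := (r - s₀) / (t - s₀) with hb
    have ha0 : 0 ≤ a := div_nonneg (by linarith) htd.le
    have hb0 : 0 ≤ b := div_nonneg (by linarith) htd.le
    have hab : a + b = 1 := by
      rw [ha, hb, ← add_div, div_eq_one_iff_eq htd.ne']
      ring
    have hcomb := hconc.2 ⟨hs0pos, hs0S⟩ ⟨ht0, htS⟩ ha0 hb0 hab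
    have hxeq : a • s₀ + b • t = r := by
      rw [smul_eq_mul, smul_eq_mul, ha, hb, div_mul_eq_mul_div, div_mul_eq_mul_div,
        ← add_div, div_eq_iff htd.ne']
      ring
    rw [hxeq, smul_eq_mul, smul_eq_mul] at hcomb
    have h1 : a * c ≤ m r := by nlinarith [mul_nonneg hb0 hmt.le]
    have h2 : c * (S - r) / (2 * (S - s₀)) ≤ a * c := by
      rw [ha, div_mul_eq_mul_div, div_le_div_iff₀ (by linarith : (0:ℝ) < 2 * (S - s₀)) htd]
      have hre : (t - r) * c * (2 * (S - s₀)) = c * (S - r) * (S - s₀) := by rw [ht]; ring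
      rw [hre]
      nlinarith [mul_nonneg (mul_nonneg hcpos.le (by linarith : (0:ℝ) ≤ S - r))
        (by linarith : (0:ℝ) ≤ S - t)]
    linarith
  -- lower bound near 0
  have lem0 : ∀ r, 0 < r → r ≤ s₀ → c * r / (2 * s₀) ≤ m r := by
    intro r hr1 hr2
    set t : ℝ := r / 2 with ht
    have htr : t < r := by simp only [ht]; linarith
    have ht0 : 0 < t := by simp only [ht]; linarith
    have hts : t < s₀ := lt_of_lt_of_le htr hr2
    have htd : (0:ℝ) < s₀ - t := by linarith
    have hmt : 0 < m t := hm_pos t ⟨ht0, by linarith⟩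
    set a : ℝ := (r - t) / (s₀ - t) with ha
    set b : ℝ := (s₀ - r) / (s₀ - t) with hb
    have ha0 : 0 ≤ a := div_nonneg (by linarith) htd.le
    have hb0 : 0 ≤ b := div_nonneg (by linarith) htd.le
    have hab : a + b = 1 := by
      rw [ha, hb, ← add_div, div_eq_one_iff_eq htd.ne']
      ring
    have hcomb := hconc.2 ⟨hs0pos, hs0S⟩ ⟨ht0, by linarith⟩ ha0 hb0 hab
    have hxeq : a • s₀ + b • t = r := by
      rw [smul_eq_mul, smul_eq_mul, ha, hb, div_mul_eq_mul_div, div_mul_eq_mul_div,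
        ← add_div, div_eq_iff htd.ne']
      ring
    rw [hxeq, smul_eq_mul, smul_eq_mul] at hcomb
    have h1 : a * c ≤ m r := by nlinarith [mul_nonneg hb0 hmt.le]
    have h2 : c * r / (2 * s₀) ≤ a * c := by
      rw [ha, div_mul_eq_mul_div, div_le_div_iff₀ (by linarith : (0:ℝ) < 2 * s₀) htd]
      have hre : (r - t) * c * (2 * s₀) = c * r * s₀ := by rw [ht]; ring
      rw [hre]
      nlinarith [mul_nonneg (mul_nonneg hcpos.le hr1.le) ht0.le]
    linarith
  -- generic interval-integrability on subintervals of (0,S)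
  have hII : ∀ (g : ℝ → ℝ), ContinuousOn g (Ioo 0 S) →
      ∀ a ∈ Ioo (0:ℝ) S, ∀ b ∈ Ioo (0:ℝ) S, IntervalIntegrable g volume a b := by
    intro g hg a ha b hb
    exact (hg.mono (Set.ordConnected_Ioo.uIcc_subset ha hb)).intervalIntegrable
  have hmne : ∀ x ∈ Ioo (0:ℝ) S, m x ≠ 0 := fun x hx => (hm_pos x hx).ne'
  have hfzCont : ∀ z : ℝ, ContinuousOn (fun r => (z - r) / m r) (Ioo 0 S) :=
    fun z => (continuousOn_const.sub continuousOn_id).div hmc hmne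
  have hgzCont : ∀ z : ℝ, ContinuousOn (fun r => (r - z) / m r) (Ioo 0 S) :=
    fun z => (continuousOn_id.sub continuousOn_const).div hmc hmne
  set h : ℝ → ℝ := fun z => ∫ r in s₀..z, (z - r) / m r with hh
  set K : ℝ := 2 * (S - s₀) / c with hK
  set K' : ℝ := 2 * s₀ / c with hK'
  have hcne : c ≠ 0 := hcpos.ne'
  have hSs : (0:ℝ) < S - s₀ := by linarith
  have hKnn : (0:ℝ) ≤ K := by
    rw [hK]; positivity
  have hKnn' : (0:ℝ) ≤ K' := by
    rw [hK']; positivity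
  have hs₀mem : s₀ ∈ Ioo (0:ℝ) S := ⟨hs0pos, hs0S⟩
  -- pointwise bound near S
  have hptS : ∀ z ∈ Ioo (0:ℝ) S, ∀ r ∈ Icc s₀ z, (z - r) / m r ≤ K := by
    intro z hz r hr
    have hrm : r ∈ Ioo (0:ℝ) S := ⟨lt_of_lt_of_le hs0pos hr.1, lt_of_le_of_lt hr.2 hz.2⟩
    have hmr : 0 < m r := hm_pos r hrm
    rw [div_le_iff₀ hmr]
    have hlow := lemS r hr.1 hrm.2
    have heq : K * (c * (S - r) / (2 * (S - s₀))) = S - r := by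
      rw [hK]
      field_simp
    nlinarith [mul_le_mul_of_nonneg_left hlow hKnn, hz.2, hr.2]
  -- pointwise bound near 0
  have hpt0 : ∀ z ∈ Ioo (0:ℝ) S, ∀ r ∈ Icc z s₀, (r - z) / m r ≤ K' := by
    intro z hz r hr
    have hrm : r ∈ Ioo (0:ℝ) S := ⟨lt_of_lt_of_le hz.1 hr.1, lt_of_le_of_lt hr.2 hs0S⟩
    have hmr : 0 < m r := hm_pos r hrm
    rw [div_le_iff₀ hmr]
    have hlow := lem0 r hrm.1 hr.2
    have heq : K' * (c * r / (2 * s₀)) = r := by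
      rw [hK']
      field_simp
    nlinarith [mul_le_mul_of_nonneg_left hlow hKnn', hz.1]
  -- symmetric form of h below s₀
  have hsymm : ∀ z : ℝ, h z = ∫ r in z..s₀, (r - z) / m r := by
    intro z
    show (∫ r in s₀..z, (z - r) / m r) = _
    rw [intervalIntegral.integral_symm s₀ z, ← intervalIntegral.integral_neg]
    congr 1
    funext r
    rw [← neg_div, neg_sub]
  -- nonnegativity of h
  have hnonneg : ∀ z ∈ Ioo (0:ℝ) S, 0 ≤ h z := by
    intro z hz
    rcases le_total s₀ z with hle | hle
    · apply intervalIntegral.integral_nonneg hle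
      intro r hr
      have hrm : r ∈ Ioo (0:ℝ) S := ⟨lt_of_lt_of_le hs0pos hr.1, lt_of_le_of_lt hr.2 hz.2⟩
      exact div_nonneg (by linarith [hr.2]) (hm_pos r hrm).le
    · rw [hsymm z]
      apply intervalIntegral.integral_nonneg hle
      intro r hr
      have hrm : r ∈ Ioo (0:ℝ) S := ⟨lt_of_lt_of_le hz.1 hr.1, lt_of_le_of_lt hr.2 hs0S⟩
      exact div_nonneg (by linarith [hr.1]) (hm_pos r hrm).le
  -- upper bound for z ≥ s₀
  have hUBS : ∀ z ∈ Ioo (0:ℝ) S, s₀ ≤ z → h z ≤ K * (S - s₀) := by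
    intro z hz hle
    have hint : IntervalIntegrable (fun r => (z - r) / m r) volume s₀ z :=
      hII _ (hfzCont z) s₀ hs₀mem z hz
    have hmono := intervalIntegral.integral_mono_on hle hint
      (intervalIntegrable_const (c := K)) (hptS z hz)
    rw [intervalIntegral.integral_const, smul_eq_mul] at hmono
    calc h z ≤ (z - s₀) * K := hmono
      _ ≤ (S - s₀) * K := by nlinarith [hz.2]
      _ = K * (S - s₀) := by ring
  -- upper bound for z ≤ s₀
  have hUB0 : ∀ z ∈ Ioo (0:ℝ) S, z ≤ s₀ → h z ≤ K' * s₀ := by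
    intro z hz hle
    rw [hsymm z]
    have hint : IntervalIntegrable (fun r => (r - z) / m r) volume z s₀ :=
      hII _ (hgzCont z) z hz s₀ hs₀mem
    have hmono := intervalIntegral.integral_mono_on hle hint
      (intervalIntegrable_const (c := K')) (hpt0 z hz)
    rw [intervalIntegral.integral_const, smul_eq_mul] at hmono
    calc (∫ r in z..s₀, (r - z) / m r) ≤ (s₀ - z) * K' := hmono
      _ ≤ s₀ * K' := by nlinarith [hz.1]
      _ = K' * s₀ := by ring
  -- monotone on (s₀, S)
  have hMono : MonotoneOn h (Ioo s₀ S) := by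
    intro z₁ hz₁ z₂ hz₂ h12
    have hz₁' : z₁ ∈ Ioo (0:ℝ) S := ⟨lt_trans hs0pos hz₁.1, hz₁.2⟩
    have hz₂' : z₂ ∈ Ioo (0:ℝ) S := ⟨lt_trans hs0pos hz₂.1, hz₂.2⟩
    have I1 : IntervalIntegrable (fun r => (z₂ - r) / m r) volume s₀ z₁ :=
      hII _ (hfzCont z₂) s₀ hs₀mem z₁ hz₁'
    have I2 : IntervalIntegrable (fun r => (z₂ - r) / m r) volume z₁ z₂ :=
      hII _ (hfzCont z₂) z₁ hz₁' z₂ hz₂'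
    have I0 : IntervalIntegrable (fun r => (z₁ - r) / m r) volume s₀ z₁ :=
      hII _ (hfzCont z₁) s₀ hs₀mem z₁ hz₁'
    have hsplit : h z₂ = (∫ r in s₀..z₁, (z₂ - r) / m r) + ∫ r in z₁..z₂, (z₂ - r) / m r :=
      (intervalIntegral.integral_add_adjacent_intervals I1 I2).symm
    have step1 : h z₁ ≤ ∫ r in s₀..z₁, (z₂ - r) / m r := by
      apply intervalIntegral.integral_mono_on hz₁.1.le I0 I1
      intro r hr
      have hrm : r ∈ Ioo (0:ℝ) S := ⟨lt_of_lt_of_le hs0pos hr.1, lt_of_le_of_lt hr.2 hz₁.2⟩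
      have hmr : 0 < m r := hm_pos r hrm
      gcongr <;> linarith
    have step2 : 0 ≤ ∫ r in z₁..z₂, (z₂ - r) / m r := by
      apply intervalIntegral.integral_nonneg h12
      intro r hr
      have hrm : r ∈ Ioo (0:ℝ) S :=
        ⟨lt_trans hs0pos (lt_of_lt_of_le hz₁.1 hr.1), lt_of_le_of_lt hr.2 hz₂.2⟩
      exact div_nonneg (by linarith [hr.2]) (hm_pos r hrm).le
    rw [hsplit]
    linarith
  -- antitone on (0, s₀)
  have hAnti : AntitoneOn h (Ioo 0 s₀) := by
    intro z₁ hz₁ z₂ hz₂ h12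
    have hz₁' : z₁ ∈ Ioo (0:ℝ) S := ⟨hz₁.1, lt_trans hz₁.2 hs0S⟩
    have hz₂' : z₂ ∈ Ioo (0:ℝ) S := ⟨hz₂.1, lt_trans hz₂.2 hs0S⟩
    rw [hsymm z₁, hsymm z₂]
    have I1 : IntervalIntegrable (fun r => (r - z₁) / m r) volume z₁ z₂ :=
      hII _ (hgzCont z₁) z₁ hz₁' z₂ hz₂'
    have I2 : IntervalIntegrable (fun r => (r - z₁) / m r) volume z₂ s₀ :=
      hII _ (hgzCont z₁) z₂ hz₂' s₀ hs₀mem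
    have I0 : IntervalIntegrable (fun r => (r - z₂) / m r) volume z₂ s₀ :=
      hII _ (hgzCont z₂) z₂ hz₂' s₀ hs₀mem
    have hsplit : (∫ r in z₁..s₀, (r - z₁) / m r)
        = (∫ r in z₁..z₂, (r - z₁) / m r) + ∫ r in z₂..s₀, (r - z₁) / m r :=
      (intervalIntegral.integral_add_adjacent_intervals I1 I2).symm
    have step1 : (∫ r in z₂..s₀, (r - z₂) / m r) ≤ ∫ r in z₂..s₀, (r - z₁) / m r := by
      apply intervalIntegral.integral_mono_on hz₂.2.le I0 I2
      intro r hr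
      have hrm : r ∈ Ioo (0:ℝ) S := ⟨lt_of_lt_of_le hz₂.1 hr.1, lt_of_le_of_lt hr.2 hs0S⟩
      have hmr : 0 < m r := hm_pos r hrm
      gcongr <;> linarith
    have step2 : 0 ≤ ∫ r in z₁..z₂, (r - z₁) / m r := by
      apply intervalIntegral.integral_nonneg h12
      intro r hr
      have hrm : r ∈ Ioo (0:ℝ) S :=
        ⟨lt_of_lt_of_le hz₁.1 hr.1, lt_of_le_of_lt hr.2 (lt_trans hz₂.2 hs0S)⟩
      exact div_nonneg (by linarith [hr.1]) (hm_pos r hrm).le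
    rw [hsplit]
    linarith
  -- continuity of primitives
  have hprim : ∀ g : ℝ → ℝ, ContinuousOn g (Ioo 0 S) →
      ContinuousOn (fun z => ∫ r in s₀..z, g r) (Ioo 0 S) := by
    intro g hg z hz
    set a : ℝ := min s₀ z / 2 with ha
    set b : ℝ := (max s₀ z + S) / 2 with hb
    have hminpos : 0 < min s₀ z := lt_min hs0pos hz.1
    have hmaxS : max s₀ z < S := max_lt hs0S hz.2
    have ha0 : 0 < a := by rw [ha]; positivity
    have has : a < min s₀ z := by rw [ha]; linarith
    have hbs : max s₀ z < b := by rw [hb]; linarith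
    have hbS : b < S := by rw [hb]; linarith
    have hamem : a ∈ Ioo (0:ℝ) S := ⟨ha0, lt_trans (lt_of_lt_of_le has (min_le_left _ _)) hs0S⟩
    have hbmem : b ∈ Ioo (0:ℝ) S := by
      refine ⟨?_, hbS⟩
      have h1 := le_max_left s₀ z
      rw [hb]; linarith
    have hab : a ≤ b := by
      have := lt_of_lt_of_le has (min_le_left s₀ z)
      have := lt_of_le_of_lt (le_max_left s₀ z) hbs
      linarith
    have hint : IntervalIntegrable g volume a b := hII g hg a hamem b hbmem
    have hs0uIcc : s₀ ∈ uIcc a b := by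
      rw [uIcc_of_le hab]
      exact ⟨(lt_of_lt_of_le has (min_le_left _ _)).le,
        (lt_of_le_of_lt (le_max_left _ _) hbs).le⟩
    have hcontOn := intervalIntegral.continuousOn_primitive_interval' hint hs0uIcc
    have hzIcc : Icc a b ∈ 𝓝 z := by
      apply Icc_mem_nhds
      · exact lt_of_lt_of_le has (min_le_right _ _)
      · exact lt_of_le_of_lt (le_max_right _ _) hbs
    have : ContinuousAt (fun z' => ∫ r in s₀..z', g r) z := by
      apply ContinuousWithinAt.continuousAt _ hzIcc
      rw [← uIcc_of_le hab] at hzIcc ⊢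
      exact hcontOn z (mem_of_mem_nhds hzIcc)
    exact this.continuousWithinAt
  -- continuity of h on (0,S)
  have hinvCont : ContinuousOn (fun r => (m r)⁻¹) (Ioo 0 S) := hmc.inv₀ hmne
  have hrmCont : ContinuousOn (fun r => r / m r) (Ioo 0 S) := continuousOn_id.div hmc hmne
  have hsplitAll : ∀ z ∈ Ioo (0:ℝ) S,
      h z = z * (∫ r in s₀..z, (m r)⁻¹) - ∫ r in s₀..z, r / m r := by
    intro z hz
    have I1 : IntervalIntegrable (fun r => z * (m r)⁻¹) volume s₀ z :=
      (hII _ hinvCont s₀ hs₀mem z hz).const_mul z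
    have I2 : IntervalIntegrable (fun r => r / m r) volume s₀ z :=
      hII _ hrmCont s₀ hs₀mem z hz
    show (∫ r in s₀..z, (z - r) / m r) = _
    have : (fun r => (z - r) / m r) = fun r => z * (m r)⁻¹ - r / m r := by
      funext r
      rw [div_eq_mul_inv, sub_mul, ← div_eq_mul_inv, ← div_eq_mul_inv]
    rw [this, intervalIntegral.integral_sub I1 I2, intervalIntegral.integral_const_mul]
  have hcontOn : ContinuousOn h (Ioo 0 S) := by
    have : ContinuousOn (fun z => z * (∫ r in s₀..z, (m r)⁻¹) - ∫ r in s₀..z, r / m r)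
        (Ioo 0 S) :=
      (continuousOn_id.mul (hprim _ hinvCont)).sub (hprim _ hrmCont)
    exact this.congr hsplitAll
  -- limit at S from the left
  have hneS : (Ioo s₀ S).Nonempty := nonempty_Ioo.2 hs0S
  have hbddS : BddAbove (h '' Ioo s₀ S) := by
    refine ⟨K * (S - s₀), ?_⟩
    rintro _ ⟨z, hz, rfl⟩
    exact hUBS z ⟨lt_trans hs0pos hz.1, hz.2⟩ hz.1.le
  have hlimS : Tendsto h (𝓝[<] S) (𝓝 (sSup (h '' Ioo s₀ S))) :=
    hMono.tendsto_nhdsWithin_Ioo_left hneS hbddS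
  -- limit at 0 from the right
  have hne0 : (Ioo (0:ℝ) s₀).Nonempty := nonempty_Ioo.2 hs0pos
  have hbdd0 : BddAbove (h '' Ioo (0:ℝ) s₀) := by
    refine ⟨K' * s₀, ?_⟩
    rintro _ ⟨z, hz, rfl⟩
    exact hUB0 z ⟨hz.1, lt_trans hz.2 hs0S⟩ hz.2.le
  have hlim0 : Tendsto h (𝓝[>] (0:ℝ)) (𝓝 (sSup (h '' Ioo (0:ℝ) s₀))) :=
    hAnti.tendsto_nhdsWithin_Ioo_right hne0 hbdd0
  refine ⟨⟨_, hlimS⟩, ⟨max (K * (S - s₀)) (K' * s₀), ?_⟩, ?_⟩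
  · intro z hz
    rw [abs_of_nonneg (hnonneg z hz)]
    rcases le_total z s₀ with hle | hle
    · exact le_trans (hUB0 z hz hle) (le_max_right _ _)
    · exact le_trans (hUBS z hz hle) (le_max_left _ _)
  · refine ⟨extendFrom (Ioo 0 S) h, ?_, ?_⟩
    · exact continuousOn_Icc_extendFrom_Ioo hcontOn hlim0 hlimS
    · exact extendFrom_extends hcontOn
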